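/- If a permutation π of {1,...,n} (n ≥ 2) avoids all quadruples of indices a < b < c < d with max{π(a), π(c)} < min{π(b), π(d)}, then either the values 1 and 2 occur in adjacent positions of π, or the last value of π is 1 or 2. -/

import Mathlib

/-- `l` is a permutation of `{1, ..., n}`, viewed as the sequence of its values. -/
def IsPermOf (l : List ℕ) (n : ℕ) : Prop := l.Perm (List.range' 1 n)

/-- `l` is B-avoiding: there are no indices `a < b < c < d` with
`max {l a, l c} < min {l b, l d}`. -/
def BAvoid (l : List ℕ) : Prop :=
  ∀ a b c d : Fin l.length, a < b → b < c → c < d →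
    ¬ (max (l.get a) (l.get c) < min (l.get b) (l.get d))

lemma aux_bavoid (π : List ℕ) (hB : BAvoid π) (hnd : π.Nodup)
    (hge : ∀ x ∈ π, 1 ≤ x)
    (p q : ℕ) (hpq : p < q) (hq : q < π.length)
    (h1 : π[p]'(hpq.trans hq) = 1 ∧ π[q] = 2 ∨ π[p]'(hpq.trans hq) = 2 ∧ π[q] = 1) :
    (∃ l r : List ℕ, π = l ++ [1, 2] ++ r ∨ π = l ++ [2, 1] ++ r) ∨
      π.getLast? = some 1 ∨ π.getLast? = some 2 := by
  have hp : p < π.length := hpq.trans hq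
  by_cases hadj : q = p + 1
  · left
    refine ⟨π.take p, π.drop (p+2), ?_⟩
    have hsplit : π = π.take p ++ [π[p], π[q]] ++ π.drop (p+2) := by
      subst hadj
      conv_lhs => rw [← List.take_append_drop p π]
      rw [List.drop_eq_getElem_cons hp, List.drop_eq_getElem_cons hq]
      simp
    rcases h1 with ⟨e1, e2⟩ | ⟨e1, e2⟩
    · left; conv_lhs => rw [hsplit, e1, e2]
    · right; conv_lhs => rw [hsplit, e1, e2]
  · by_cases hlast : q = π.length - 1
    · right
      have hne : π ≠ [] := by intro h; simp [h] at hq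
      subst hlast
      have hval : π.getLast? = some π[π.length - 1] := by
        rw [List.getLast?_eq_getLast hne, List.getLast_eq_getElem]
      rcases h1 with ⟨_, e2⟩ | ⟨_, e2⟩
      · right; rw [hval, e2]
      · left; rw [hval, e2]
    · exfalso
      have hq1 : q < π.length - 1 := lt_of_le_of_ne (by omega) hlast
      have hb : p + 1 < q := lt_of_le_of_ne (by omega) (Ne.symm hadj)
      have hbL : p + 1 < π.length := by omega
      have hdL : π.length - 1 < π.length := by omega
      have key := hB ⟨p, hp⟩ ⟨p+1, hbL⟩ ⟨q, hq⟩ ⟨π.length - 1, hdL⟩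
        (by simp) (by simpa using hb) (by simpa using hq1)
      apply key
      simp only [List.get_eq_getElem]
      have hne_b1 : π[p+1] ≠ π[p] := by
        intro h
        have := (List.Nodup.getElem_inj_iff hnd).mp h
        omega
      have hne_b2 : π[p+1] ≠ π[q] := by
        intro h
        have := (List.Nodup.getElem_inj_iff hnd).mp h
        omega
      have hne_d1 : π[π.length-1] ≠ π[p] := by
        intro h
        have := (List.Nodup.getElem_inj_iff hnd).mp h
        omega
      have hne_d2 : π[π.length-1] ≠ π[q] := by
        intro h
        have := (List.Nodup.getElem_inj_iff hnd).mp h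
        omega
      have hgb : 1 ≤ π[p+1] := hge _ (List.getElem_mem _)
      have hgd : 1 ≤ π[π.length-1] := hge _ (List.getElem_mem _)
      rcases h1 with ⟨e1, e2⟩ | ⟨e1, e2⟩ <;> omega

theorem stmt2 (n : ℕ) (hn : 2 ≤ n) (π : List ℕ) (hπ : IsPermOf π n) (hB : BAvoid π) :
    (∃ l r : List ℕ, π = l ++ [1, 2] ++ r ∨ π = l ++ [2, 1] ++ r) ∨
      π.getLast? = some 1 ∨ π.getLast? = some 2 := by
  have hnd : π.Nodup := hπ.nodup_iff.mpr (by simp [List.nodup_range'])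
  have hge : ∀ x ∈ π, 1 ≤ x := by
    intro x hx
    have := (List.mem_range'_1.mp (hπ.mem_iff.mp hx)).1
    simpa using this
  have h1 : (1 : ℕ) ∈ π := hπ.mem_iff.mpr (List.mem_range'_1.mpr (by omega))
  have h2 : (2 : ℕ) ∈ π := hπ.mem_iff.mpr (List.mem_range'_1.mpr (by omega))
  obtain ⟨i, hi, hvi⟩ := List.getElem_of_mem h1
  obtain ⟨j, hj, hvj⟩ := List.getElem_of_mem h2
  have hij : i ≠ j := by intro h; subst h; omega
  rcases lt_or_gt_of_ne hij with h | h
  · exact aux_bavoid π hB hnd hge i j h hj (Or.inl ⟨hvi, hvj⟩)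
  · exact aux_bavoid π hB hnd hge j i h hi (Or.inr ⟨hvj, hvi⟩)
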